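/- With up^[n] defined by up^[1] = ↑ and up^[n] = {up^[n-1] | *}, for every n ≥ 1 the game up^[n] + * equals the game {0, up^[n-1] + * | 0, up^[n+1] + *} (with up^[0] + * interpreted as *). -/

import Mathlib

universe u

namespace SetTheory

/-- Pre-games, as in the older Mathlib (`SetTheory.PGame`, since removed from Mathlib). -/
inductive PGame : Type (u + 1)
  | mk : ∀ α β : Type u, (α → PGame) → (β → PGame) → PGame

namespace PGame

/-- The game `{|}`, as in the older Mathlib. -/
instance : Zero PGame := ⟨⟨PEmpty, PEmpty, PEmpty.elim, PEmpty.elim⟩⟩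

/-- `ofLists L R` is the game `{L | R}`, as in the older Mathlib. -/
def ofLists (L R : List PGame.{u}) : PGame.{u} :=
  mk (ULift (Fin L.length)) (ULift (Fin R.length)) (fun i => L.get i.down) fun j => R.get j.down

/-- Inner recursion for `leLF`. -/
def leLFAux {xl xr : Type u} (IL : xl → PGame.{u} → Prop × Prop)
    (IR : xr → PGame.{u} → Prop × Prop) : PGame.{u} → Prop × Prop
  | mk yl yr yL yR =>
    ((∀ i, (IL i (mk yl yr yL yR)).2) ∧ (∀ j, (leLFAux IL IR (yR j)).2),
     (∃ i, (leLFAux IL IR (yL i)).1) ∨ (∃ j, (IR j (mk yl yr yL yR)).1))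

/-- `leLF x y = (x ≤ y, x ⧏ y)`, as the older Mathlib's `PGame.le_lf`. -/
def leLF : PGame.{u} → PGame.{u} → Prop × Prop
  | mk _ _ xL xR => leLFAux (fun i => leLF (xL i)) (fun j => leLF (xR j))

/-- The order on pre-games, as in the older Mathlib. -/
instance : LE PGame := ⟨fun x y => (leLF x y).1⟩

/-- Equivalence `x ≈ y ↔ x ≤ y ∧ y ≤ x`, as in the older Mathlib. -/
instance : HasEquiv PGame := ⟨fun x y => x ≤ y ∧ y ≤ x⟩

/-- Inner recursion for `add`. -/
def addAux {xl xr : Type u} (IL : xl → PGame.{u} → PGame.{u}) (IR : xr → PGame.{u} → PGame.{u})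
    (x : PGame.{u}) : PGame.{u} → PGame.{u}
  | mk yl yr yL yR =>
    mk (xl ⊕ yl) (xr ⊕ yr) (Sum.elim (fun i => IL i (mk yl yr yL yR)) fun i => addAux IL IR x (yL i))
      (Sum.elim (fun j => IR j (mk yl yr yL yR)) fun j => addAux IL IR x (yR j))

/-- Sum of pre-games, as in the older Mathlib. -/
def add : PGame.{u} → PGame.{u} → PGame.{u}
  | mk xl xr xL xR => addAux (fun i => add (xL i)) (fun j => add (xR j)) (mk xl xr xL xR)

instance : Add PGame.{u} := ⟨add⟩

end PGame

end SetTheory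

open SetTheory PGame

/-- star = {0|0} -/
noncomputable def star' : PGame := PGame.ofLists [0] [0]
/-- up = {0|*} -/
noncomputable def up' : PGame := PGame.ofLists [0] [star']
/-- down = {*|0} -/
noncomputable def down' : PGame := PGame.ofLists [star'] [0]

/-- sum of n copies of up -/
noncomputable def nUp : ℕ → PGame
  | 0 => 0
  | n + 1 => nUp n + up'

/-- sum of n copies of down -/
noncomputable def nDown : ℕ → PGame
  | 0 => 0
  | n + 1 => nDown n + down'

/-- iterated up: up^[1] = ↑, up^[n] = {up^[n-1] | *} -/
noncomputable def upIter : ℕ → PGame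
  | 0 => 0
  | 1 => up'
  | n + 2 => PGame.ofLists [upIter (n + 1)] [star']

/-- iterated down: down_[1] = ↓, down_[n] = {* | down_[n-1]} -/
noncomputable def downIter : ℕ → PGame
  | 0 => 0
  | 1 => down'
  | n + 2 => PGame.ofLists [star'] [downIter (n + 1)]

/-- up^[n] + *, with up^[0] + * interpreted as * -/
noncomputable def upIterStar : ℕ → PGame
  | 0 => star'
  | n + 1 => upIter (n + 1) + star'

namespace SetTheory.PGame

@[reducible] def LeftMoves (x : PGame.{u}) : Type u := x.1

@[reducible] def RightMoves (x : PGame.{u}) : Type u := x.2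

attribute [reducible] ofLists

def moveLeft (x : PGame.{u}) : LeftMoves x → PGame.{u} := x.3

def moveRight (x : PGame.{u}) : RightMoves x → PGame.{u} := x.4

/-- `LF x y` is `x ⧏ y`. -/
def LF (x y : PGame.{u}) : Prop := (leLF x y).2

theorem le_of_forall_lf {x y : PGame.{u}} (h1 : ∀ i, LF (x.moveLeft i) y)
    (h2 : ∀ j, LF x (y.moveRight j)) : x ≤ y := by
  cases x; cases y; exact ⟨h1, h2⟩

theorem lf_iff_exists_le {x y : PGame.{u}} :
    LF x y ↔ (∃ i, x ≤ y.moveLeft i) ∨ ∃ j, x.moveRight j ≤ y := by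
  cases x; cases y; exact Iff.rfl

@[refl] theorem le_refl' (x : PGame.{u}) : x ≤ x := by
  induction x with
  | mk xl xr xL xR ihl ihr =>
    exact le_of_forall_lf (fun i => lf_iff_exists_le.2 (Or.inl ⟨i, ihl i⟩))
      (fun j => lf_iff_exists_le.2 (Or.inr ⟨j, ihr j⟩))

theorem Equiv.le {x y : PGame.{u}} (h : x ≈ y) : x ≤ y := h.1

theorem Equiv.ge {x y : PGame.{u}} (h : x ≈ y) : y ≤ x := h.2

theorem Equiv.symm {x y : PGame.{u}} (h : x ≈ y) : y ≈ x := ⟨h.2, h.1⟩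

theorem equiv_rfl {x : PGame.{u}} : x ≈ x := ⟨le_refl' x, le_refl' x⟩

theorem ofLists_moveLeft' {L R : List PGame.{u}} (i : ULift (Fin L.length)) :
    (ofLists L R).moveLeft i = L[i.down.1]'i.down.2 := by
  show L.get i.down = _
  simp

theorem ofLists_moveRight' {L R : List PGame.{u}} (i : ULift (Fin R.length)) :
    (ofLists L R).moveRight i = R[i.down.1]'i.down.2 := by
  show R.get i.down = _
  simp

def toLeftMovesAdd : {x y : PGame.{u}} → x.LeftMoves ⊕ y.LeftMoves ≃ (x + y).LeftMoves
  | mk _ _ _ _, mk _ _ _ _ => Equiv.refl _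

def toRightMovesAdd : {x y : PGame.{u}} → x.RightMoves ⊕ y.RightMoves ≃ (x + y).RightMoves
  | mk _ _ _ _, mk _ _ _ _ => Equiv.refl _

theorem add_moveLeft_inl {x y : PGame.{u}} (i : x.LeftMoves) :
    (x + y).moveLeft (toLeftMovesAdd (Sum.inl i)) = x.moveLeft i + y := by
  cases x; cases y; rfl

theorem add_moveLeft_inr {x y : PGame.{u}} (i : y.LeftMoves) :
    (x + y).moveLeft (toLeftMovesAdd (Sum.inr i)) = x + y.moveLeft i := by
  cases x; cases y; rfl

theorem add_moveRight_inl {x y : PGame.{u}} (i : x.RightMoves) :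
    (x + y).moveRight (toRightMovesAdd (Sum.inl i)) = x.moveRight i + y := by
  cases x; cases y; rfl

theorem add_moveRight_inr {x y : PGame.{u}} (i : y.RightMoves) :
    (x + y).moveRight (toRightMovesAdd (Sum.inr i)) = x + y.moveRight i := by
  cases x; cases y; rfl

instance isEmpty_zero_leftMoves : IsEmpty (LeftMoves (0 : PGame.{u})) :=
  inferInstanceAs (IsEmpty PEmpty)

instance isEmpty_zero_rightMoves : IsEmpty (RightMoves (0 : PGame.{u})) :=
  inferInstanceAs (IsEmpty PEmpty)

instance isEmpty_add_leftMoves {x y : PGame.{u}} [IsEmpty x.LeftMoves] [IsEmpty y.LeftMoves] :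
    IsEmpty (x + y).LeftMoves :=
  (toLeftMovesAdd (x := x) (y := y)).symm.isEmpty

instance isEmpty_add_rightMoves {x y : PGame.{u}} [IsEmpty x.RightMoves] [IsEmpty y.RightMoves] :
    IsEmpty (x + y).RightMoves :=
  (toRightMovesAdd (x := x) (y := y)).symm.isEmpty

theorem add_zero_equiv (x : PGame.{u}) : x + 0 ≈ x := by
  induction x with
  | mk xl xr xL xR ihl ihr =>
    refine ⟨le_of_forall_lf ?_ ?_, le_of_forall_lf ?_ ?_⟩
    · intro i
      rw [← toLeftMovesAdd.apply_symm_apply i]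
      cases' toLeftMovesAdd.symm i with k k
      · rw [add_moveLeft_inl]
        exact lf_iff_exists_le.2 (Or.inl ⟨k, (ihl k).1⟩)
      · exact isEmptyElim k
    · intro j
      refine lf_iff_exists_le.2 (Or.inr ⟨toRightMovesAdd (Sum.inl j), ?_⟩)
      rw [add_moveRight_inl]
      exact (ihr j).1
    · intro i
      refine lf_iff_exists_le.2 (Or.inl ⟨toLeftMovesAdd (Sum.inl i), ?_⟩)
      rw [add_moveLeft_inl]
      exact (ihl i).2
    · intro j
      rw [← toRightMovesAdd.apply_symm_apply j]
      cases' toRightMovesAdd.symm j with k k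
      · rw [add_moveRight_inl]
        exact lf_iff_exists_le.2 (Or.inr ⟨k, (ihr k).2⟩)
      · exact isEmptyElim k

theorem zero_add_equiv (x : PGame.{u}) : 0 + x ≈ x := by
  induction x with
  | mk xl xr xL xR ihl ihr =>
    refine ⟨le_of_forall_lf ?_ ?_, le_of_forall_lf ?_ ?_⟩
    · intro i
      rw [← toLeftMovesAdd.apply_symm_apply i]
      cases' toLeftMovesAdd.symm i with k k
      · exact isEmptyElim k
      · rw [add_moveLeft_inr]
        exact lf_iff_exists_le.2 (Or.inl ⟨k, (ihl k).1⟩)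
    · intro j
      refine lf_iff_exists_le.2 (Or.inr ⟨toRightMovesAdd (Sum.inr j), ?_⟩)
      rw [add_moveRight_inr]
      exact (ihr j).1
    · intro i
      refine lf_iff_exists_le.2 (Or.inl ⟨toLeftMovesAdd (Sum.inr i), ?_⟩)
      rw [add_moveLeft_inr]
      exact (ihl i).2
    · intro j
      rw [← toRightMovesAdd.apply_symm_apply j]
      cases' toRightMovesAdd.symm j with k k
      · exact isEmptyElim k
      · rw [add_moveRight_inr]
        exact lf_iff_exists_le.2 (Or.inr ⟨k, (ihr k).2⟩)

end SetTheory.PGame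

attribute [reducible] star'

lemma upIter_succ (n : ℕ) : upIter (n + 1) = PGame.ofLists [upIter n] [star'] := by
  cases n <;> rfl

lemma star'_moveLeft (i) : star'.moveLeft i = 0 := by
  show (PGame.ofLists [0] [0]).moveLeft i = 0
  rw [ofLists_moveLeft']; simp

lemma star'_moveRight (j) : star'.moveRight j = 0 := by
  show (PGame.ofLists [0] [0]).moveRight j = 0
  rw [ofLists_moveRight']; simp

lemma ofLists_singleton_moveLeft (x : PGame) (rs : List PGame) (i) :
    (PGame.ofLists [x] rs).moveLeft i = x := by
  rw [ofLists_moveLeft']; simp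

lemma ofLists_singleton_moveRight (ls : List PGame) (x : PGame) (j) :
    (PGame.ofLists ls [x]).moveRight j = x := by
  rw [ofLists_moveRight']; simp

lemma zero_le_upIter (n : ℕ) : 0 ≤ upIter (n + 1) := by
  rw [upIter_succ]
  apply le_of_forall_lf
  · rintro ⟨⟩
  · intro j
    rw [ofLists_singleton_moveRight, lf_iff_exists_le]
    exact Or.inl ⟨ULift.up ⟨0, by simp⟩, by rw [star'_moveLeft]⟩

lemma star'_add_star'_le_zero : star' + star' ≤ 0 := by
  apply le_of_forall_lf
  · intro i
    rw [← toLeftMovesAdd.apply_symm_apply i]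
    cases' toLeftMovesAdd.symm i with k k
    · rw [add_moveLeft_inl, star'_moveLeft, lf_iff_exists_le]
      refine Or.inr ⟨toRightMovesAdd (Sum.inr (ULift.up ⟨0, by simp⟩)), ?_⟩
      rw [add_moveRight_inr, star'_moveRight]
      exact PGame.Equiv.le (add_zero_equiv 0)
    · rw [add_moveLeft_inr, star'_moveLeft, lf_iff_exists_le]
      refine Or.inr ⟨toRightMovesAdd (Sum.inl (ULift.up ⟨0, by simp⟩)), ?_⟩
      rw [add_moveRight_inl, star'_moveRight]
      exact PGame.Equiv.le (zero_add_equiv 0)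
  · rintro ⟨⟩

lemma zero_le_star'_add_star' : 0 ≤ star' + star' := by
  apply le_of_forall_lf
  · rintro ⟨⟩
  · intro j
    rw [← toRightMovesAdd.apply_symm_apply j]
    cases' toRightMovesAdd.symm j with k k
    · rw [add_moveRight_inl, star'_moveRight, lf_iff_exists_le]
      refine Or.inl ⟨toLeftMovesAdd (Sum.inr (ULift.up ⟨0, by simp⟩)), ?_⟩
      rw [add_moveLeft_inr, star'_moveLeft]
      exact PGame.Equiv.ge (add_zero_equiv 0)
    · rw [add_moveRight_inr, star'_moveRight, lf_iff_exists_le]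
      refine Or.inl ⟨toLeftMovesAdd (Sum.inl (ULift.up ⟨0, by simp⟩)), ?_⟩
      rw [add_moveLeft_inl, star'_moveLeft]
      exact PGame.Equiv.ge (zero_add_equiv 0)

lemma upIterStar_equiv (n : ℕ) : upIterStar n ≈ upIter n + star' := by
  cases n with
  | zero => exact PGame.Equiv.symm (zero_add_equiv star')
  | succ m => exact equiv_rfl

lemma empty_le_ofLists_add_zero (z : PGame) [IsEmpty z.LeftMoves] [IsEmpty z.RightMoves]
    (U : PGame) : z ≤ PGame.ofLists [U] [star'] + 0 := by
  apply le_of_forall_lf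
  · intro i; exact isEmptyElim i
  · intro j
    rw [← toRightMovesAdd.apply_symm_apply j]
    cases' toRightMovesAdd.symm j with k k
    · rw [add_moveRight_inl, ofLists_singleton_moveRight, lf_iff_exists_le]
      refine Or.inl ⟨toLeftMovesAdd (Sum.inl (ULift.up ⟨0, by simp⟩)), ?_⟩
      rw [add_moveLeft_inl, star'_moveLeft]
      exact le_of_forall_lf (fun i => isEmptyElim i) (fun j => isEmptyElim j)
    · exact isEmptyElim k

lemma star'_add_zero_le (m : ℕ) : star' + 0 ≤ upIter (m + 1) + star' := by
  rw [upIter_succ]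
  apply le_of_forall_lf
  · intro i
    rw [← toLeftMovesAdd.apply_symm_apply i]
    cases' toLeftMovesAdd.symm i with k k
    · rw [add_moveLeft_inl, star'_moveLeft, lf_iff_exists_le]
      refine Or.inl ⟨toLeftMovesAdd (Sum.inr (ULift.up ⟨0, by simp⟩)), ?_⟩
      rw [add_moveLeft_inr, star'_moveLeft]
      exact empty_le_ofLists_add_zero (0 + 0) (upIter m)
    · exact isEmptyElim k
  · intro j
    rw [← toRightMovesAdd.apply_symm_apply j]
    cases' toRightMovesAdd.symm j with k k
    · rw [add_moveRight_inl, ofLists_singleton_moveRight, lf_iff_exists_le]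
      refine Or.inl ⟨toLeftMovesAdd (Sum.inr (ULift.up ⟨0, by simp⟩)), ?_⟩
      rw [add_moveLeft_inr, star'_moveLeft]
    · rw [add_moveRight_inr, star'_moveRight, lf_iff_exists_le]
      refine Or.inr ⟨toRightMovesAdd (Sum.inl (ULift.up ⟨0, by simp⟩)), ?_⟩
      rw [add_moveRight_inl, star'_moveRight]
      exact empty_le_ofLists_add_zero (0 + 0) (upIter m)

theorem stmt8 (n : ℕ) (hn : 1 ≤ n) :
    upIter n + star' ≈
      PGame.ofLists [0, upIterStar (n - 1)] [0, upIterStar (n + 1)] := by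
  obtain ⟨m, rfl⟩ : ∃ m, n = m + 1 := ⟨n - 1, (Nat.succ_pred_eq_of_pos hn).symm⟩
  simp only [Nat.add_sub_cancel]
  have e1 : upIter (m + 1) = PGame.ofLists [upIter m] [star'] := upIter_succ m
  have e2 : upIterStar (m + 1 + 1) =
      PGame.ofLists [PGame.ofLists [upIter m] [star']] [star'] + star' := by
    rw [show upIterStar (m + 1 + 1) = upIter (m + 2) + star' from rfl, upIter_succ (m + 1),
      upIter_succ m]
  rw [e1, e2]
  constructor
  · -- ofLists [upIter m] [star'] + star' ≤ H
    apply le_of_forall_lf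
    · intro i
      rw [← toLeftMovesAdd.apply_symm_apply i]
      cases' toLeftMovesAdd.symm i with k k
      · -- move in ofLists [upIter m] [star'] : to upIter m + star'
        rw [add_moveLeft_inl, ofLists_singleton_moveLeft, lf_iff_exists_le]
        refine Or.inl ⟨ULift.up ⟨1, by simp⟩, ?_⟩
        rw [ofLists_moveLeft']
        simp only [ULift.up_down]
        simp only [List.getElem_cons_succ, List.getElem_cons_zero]
        exact PGame.Equiv.ge (upIterStar_equiv m)
      · -- move in star' : to (ofLists [upIter m] [star']) + 0
        rw [add_moveLeft_inr, star'_moveLeft, lf_iff_exists_le]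
        refine Or.inr ⟨toRightMovesAdd (Sum.inl (ULift.up ⟨0, by simp⟩)), ?_⟩
        rw [add_moveRight_inl, ofLists_singleton_moveRight]
        -- star' + 0 ≤ H
        apply le_of_forall_lf
        · intro i'
          rw [← toLeftMovesAdd.apply_symm_apply i']
          cases' toLeftMovesAdd.symm i' with k' k'
          · rw [add_moveLeft_inl, star'_moveLeft, lf_iff_exists_le]
            refine Or.inl ⟨ULift.up ⟨0, by simp⟩, ?_⟩
            rw [ofLists_moveLeft']
            simp only [ULift.up_down, List.getElem_cons_zero]
            exact PGame.Equiv.le (add_zero_equiv 0)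
          · exact PEmpty.elim k'
        · rintro ⟨⟨j', hj'⟩⟩
          rw [ofLists_moveRight']
          simp only [List.length_cons, List.length_nil] at hj'
          rw [lf_iff_exists_le]
          interval_cases j'
          · simp only [List.getElem_cons_zero]
            refine Or.inr ⟨toRightMovesAdd (Sum.inl (ULift.up ⟨0, by simp⟩)), ?_⟩
            rw [add_moveRight_inl, star'_moveRight]
            exact PGame.Equiv.le (add_zero_equiv 0)
          · simp only [List.getElem_cons_succ, List.getElem_cons_zero]
            refine Or.inl ⟨toLeftMovesAdd (Sum.inl (ULift.up ⟨0, by simp⟩)), ?_⟩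
            rw [add_moveLeft_inl, ofLists_singleton_moveLeft, ← e1]
            exact star'_add_zero_le m
    · rintro ⟨⟨j, hj⟩⟩
      rw [ofLists_moveRight']
      simp only [List.length_cons, List.length_nil] at hj
      rw [lf_iff_exists_le]
      interval_cases j
      · -- right option 0 of H
        simp only [List.getElem_cons_zero]
        refine Or.inr ⟨toRightMovesAdd (Sum.inl (ULift.up ⟨0, by simp⟩)), ?_⟩
        rw [add_moveRight_inl, ofLists_singleton_moveRight]
        exact star'_add_star'_le_zero
      · -- right option upIterStar (m+2) of H
        simp only [List.getElem_cons_succ, List.getElem_cons_zero]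
        refine Or.inl ⟨toLeftMovesAdd (Sum.inl (ULift.up ⟨0, by simp⟩)), ?_⟩
        rw [add_moveLeft_inl, ofLists_singleton_moveLeft]
  · -- H ≤ ofLists [upIter m] [star'] + star'
    apply le_of_forall_lf
    · rintro ⟨⟨i, hi⟩⟩
      rw [ofLists_moveLeft']
      simp only [List.length_cons, List.length_nil] at hi
      rw [lf_iff_exists_le]
      interval_cases i
      · -- left option 0 of H
        simp only [List.getElem_cons_zero]
        refine Or.inl ⟨toLeftMovesAdd (Sum.inr (ULift.up ⟨0, by simp⟩)), ?_⟩
        rw [add_moveLeft_inr, star'_moveLeft, ← e1]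
        rw [e1]; exact empty_le_ofLists_add_zero 0 (upIter m)
      · -- left option upIterStar m of H
        simp only [List.getElem_cons_succ, List.getElem_cons_zero]
        refine Or.inl ⟨toLeftMovesAdd (Sum.inl (ULift.up ⟨0, by simp⟩)), ?_⟩
        rw [add_moveLeft_inl, ofLists_singleton_moveLeft]
        exact PGame.Equiv.le (upIterStar_equiv m)
    · intro j
      rw [← toRightMovesAdd.apply_symm_apply j]
      cases' toRightMovesAdd.symm j with k k
      · -- right move in ofLists [upIter m] [star']: to star' + star'
        rw [add_moveRight_inl, ofLists_singleton_moveRight, lf_iff_exists_le]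
        refine Or.inr ⟨ULift.up ⟨0, by simp⟩, ?_⟩
        rw [ofLists_moveRight']
        simp only [ULift.up_down, List.getElem_cons_zero]
        exact zero_le_star'_add_star'
      · -- right move in star': to (ofLists [upIter m] [star']) + 0
        rw [add_moveRight_inr, star'_moveRight, lf_iff_exists_le]
        refine Or.inr ⟨ULift.up ⟨0, by simp⟩, ?_⟩
        rw [ofLists_moveRight']
        simp only [ULift.up_down, List.getElem_cons_zero]
        rw [← e1]
        rw [e1]; exact empty_le_ofLists_add_zero 0 (upIter m)
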